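/- arXiv:2605.26199 — 2 statements merged into one kernel-verified Lean document; each statement's English description precedes it below -/
import Mathlib

section
/- For any spiny symmetric set X and any n ≥ 2, the n-coskeleton cosk_n X is isomorphic to the symmetric subset of Mat(X₁) whose m-simplices are those matrices M ∈ Mat(X₁)_m such that α*M ∈ μ_X(Xₙ) for every map α : [n] → [m] in Υ. In particular, cosk_n X is spiny. -/
open CategoryTheory Opposite

/-- The skeleton of the category of finite nonempty sets: objects are natural
numbers `n`, standing for `[n] = {0, …, n}`, morphisms are all functions. -/
def Ups : Type := ℕ

/-- The natural number underlying an object of `Ups`. -/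
def Ups.toNat : Ups → ℕ := fun n => n

/-- The object `[n]` of `Ups`. -/
def Ups.of : ℕ → Ups := fun n => n

instance : Category Ups where
  Hom n m := Fin (n.toNat + 1) → Fin (m.toNat + 1)
  id _ := _root_.id
  comp f g := g ∘ f

/-- A symmetric set is a presheaf on `Ups`. -/
abbrev SymmSet := Upsᵒᵖ ⥤ Type

/-- The map `ε_{ij} : [1] → [n]` sending `0, 1` to `i, j`. -/
def eps (n : ℕ) (i j : Fin (n + 1)) : Ups.of 1 ⟶ Ups.of n :=
  fun k => if k = 0 then i else j

/-- The set of `n`-simplices of a symmetric set. -/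
abbrev simp (X : SymmSet) (n : ℕ) : Type := X.obj (op (Ups.of n))

/-- The Bousfield–Segal map `𝓑ₙ : Xₙ → X₁ⁿ`, `x ↦ (ε₀₁*x, …, ε₀ₙ*x)`. -/
def BS (X : SymmSet) (n : ℕ) (x : simp X n) : Fin n → simp X 1 :=
  fun k => X.map (eps n 0 k.succ).op x

/-- The Segal map `𝓔ₙ : Xₙ → X₁ⁿ`, `x ↦ (ε₀₁*x, ε₁₂*x, …, ε₍ₙ₋₁₎ₙ*x)`. -/
def ES (X : SymmSet) (n : ℕ) (x : simp X n) : Fin n → simp X 1 :=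
  fun k => X.map (eps n k.castSucc k.succ).op x

/-- The canonical map `μ_X` to matrices, `x ↦ (ε_{ij}* x)_{ij}`. -/
def muMat (X : SymmSet) (n : ℕ) (x : simp X n) :
    Fin (n + 1) → Fin (n + 1) → simp X 1 :=
  fun i j => X.map (eps n i j).op x

/-- A symmetric set is spiny if all Bousfield–Segal maps are injective. -/
def Spiny (X : SymmSet) : Prop := ∀ n, Function.Injective (BS X n)
/-- The matrix symmetric set `Mat(S)`: `n`-simplices are functions `[n]×[n] → S`. -/
def MatS (S : Type) : SymmSet where
  obj k := Fin (k.unop.toNat + 1) → Fin (k.unop.toNat + 1) → S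
  map f := TypeCat.ofHom fun M => fun a b => M (f.unop a) (f.unop b)
  map_id := by intros; rfl
  map_comp := by intros; rfl

/-- An `n`-simplex is degenerate if it is `ρ* y` for a noninvertible surjection
`ρ : [n] ↠ [m]` and an `m`-simplex `y`. -/
def Degen (X : SymmSet) (n : ℕ) (x : simp X n) : Prop :=
  ∃ (m : ℕ) (ρ : Ups.of n ⟶ Ups.of m), Function.Surjective ρ ∧
    ¬ Function.Bijective ρ ∧ ∃ y : simp X m, x = X.map ρ.op y

/-- The `d`-skeleton of a symmetric set, as a symmetric subset. -/
def skel (X : SymmSet) (d : ℕ) : SymmSet where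
  obj k := {x : X.obj k // ∃ (i : ℕ) (_ : i ≤ d) (α : k.unop ⟶ Ups.of i)
      (y : simp X i), x = X.map α.op y}
  map f := TypeCat.ofHom fun x => ⟨X.map f x.1, by
    obtain ⟨i, hi, α, y, hy⟩ := x.2
    refine ⟨i, hi, f.unop ≫ α, y, ?_⟩
    rw [hy, ← FunctorToTypes.map_comp_apply]
    rfl⟩
  map_id := by
    intro k; ext x
    simp
  map_comp := by
    intro k k' k'' f g; ext x
    simp

/-- A symmetric set is `d`-skeletal when all simplices above dimension `d`
are degenerate. -/
def SkeletalLE (X : SymmSet) (d : ℕ) : Prop :=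
  ∀ n, d < n → ∀ x : simp X n, Degen X n x

/-- `X` has dimension `d` when `d` is the least integer such that `X` is
`d`-skeletal. -/
def HasDim (X : SymmSet) (d : ℕ) : Prop :=
  IsLeast {m | SkeletalLE X m} d

/-- A symmetric set is reduced when it has exactly one `0`-simplex. -/
def Reduced (X : SymmSet) : Prop :=
  Nonempty (simp X 0) ∧ Subsingleton (simp X 0)

/-- A partial group is a reduced spiny symmetric set. -/
def IsPartialGroup (X : SymmSet) : Prop := Reduced X ∧ Spiny X

/-- A partial group is trivial when it has no nonidentity elements. -/
def TrivialPG (X : SymmSet) : Prop := Subsingleton (simp X 1)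

/-- The order of a partial group: the number of its elements (edges). -/
noncomputable def orderPG (X : SymmSet) : ℕ := Nat.card (simp X 1)

/-- An edge is an identity if it is in the image of the degeneracy `X₀ → X₁`. -/
def isIdent (X : SymmSet) (e : simp X 1) : Prop :=
  ∃ v : simp X 0, e = X.map (Quiver.Hom.op
    ((fun _ => 0 : Fin 2 → Fin 1) : Ups.of 1 ⟶ Ups.of 0)) v

/-- The source vertex of an edge. -/
def srcE (X : SymmSet) (e : simp X 1) : simp X 0 :=
  X.map (Quiver.Hom.op ((fun _ => 0 : Fin 1 → Fin 2) : Ups.of 0 ⟶ Ups.of 1)) e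

/-- `X` has (higher Segal) degree at most `k`: for each starry word `w` of
length `n+1 ≥ k+1`, if the last `k+1` faces `d_{n+1-k} w, …, d_{n+1} w` of `w`
are Bousfield–Segal images of simplices, then so is `w`. -/
def HasDegLE (X : SymmSet) (k : ℕ) : Prop :=
  ∀ n, k ≤ n → ∀ w : Fin (n + 1) → simp X 1,
    (∀ a b, srcE X (w a) = srcE X (w b)) →
    (∀ i : Fin (n + 1), n ≤ (i : ℕ) + k →
      (fun j : Fin n => w (i.succAbove j)) ∈ Set.range (BS X n)) →
    w ∈ Set.range (BS X (n + 1))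

/-- `X` has degree `d`: `d` is the least `k ≥ 1` with `HasDegLE X k`. -/
def DegreeIs (X : SymmSet) (d : ℕ) : Prop :=
  IsLeast {k | 1 ≤ k ∧ HasDegLE X k} d

/-- `W`, with structure maps `i, j`, is a coproduct of `Y` and `Z` in the
category of partial groups. -/
def IsPGCoproduct (W Y Z : SymmSet) (i : Y ⟶ W) (j : Z ⟶ W) : Prop :=
  ∀ V : SymmSet, IsPartialGroup V → ∀ (f : Y ⟶ V) (g : Z ⟶ V),
    ∃! h : W ⟶ V, i ≫ h = f ∧ j ≫ h = g

/-- The nerve of a group `G`, as a symmetric set: an `n`-simplex is a matrix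
`(g_{ij})` of elements of `G` satisfying the cocycle condition. -/
def grpNerve (G : Type) [Group G] : SymmSet where
  obj k := {M : Fin (k.unop.toNat + 1) → Fin (k.unop.toNat + 1) → G //
      ∀ i j l, M i j * M j l = M i l}
  map f := TypeCat.ofHom fun M => ⟨fun a b => M.1 (f.unop a) (f.unop b),
    fun i j l => M.2 (f.unop i) (f.unop j) (f.unop l)⟩
  map_id := by intro k; ext M; rfl
  map_comp := by intros; ext M; rfl

/-- The full subcategory `Υ_{≤ n}` of `Ups` on the objects `[0], …, [n]`. -/
abbrev UpsLE (n : ℕ) := CategoryTheory.ObjectProperty.FullSubcategory (fun k : Ups => k.toNat ≤ n)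

/-- The inclusion `Υ_{≤ n} → Υ`. -/
abbrev upsIncl (n : ℕ) : UpsLE n ⥤ Ups := ObjectProperty.ι _

/-- The `n`-coskeleton of a symmetric set: the right Kan extension of the
restriction of `X` to `Υ_{≤ n}` along the inclusion. -/
noncomputable def cosk (n : ℕ) (X : SymmSet) : SymmSet :=
  ((upsIncl n).op.ran).obj ((upsIncl n).op ⋙ X)

/-- The canonical (unit) map `X ⟶ cosk_n X`. -/
noncomputable def coskUnit (n : ℕ) (X : SymmSet) : X ⟶ cosk n X :=
  (((upsIncl n).op.ranAdjunction (Type)).unit).app X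

/-- The symmetric subset of `Mat(X₁)` whose `m`-simplices are the matrices all
of whose restrictions along maps `[n] → [m]` come from `n`-simplices of `X`. -/
def coskSub (X : SymmSet) (n : ℕ) : SymmSet where
  obj k := {M : Fin (k.unop.toNat + 1) → Fin (k.unop.toNat + 1) → simp X 1 //
      ∀ α : Ups.of n ⟶ k.unop, (fun a b => M (α a) (α b)) ∈ Set.range (muMat X n)}
  map f := TypeCat.ofHom fun M => ⟨fun a b => M.1 (f.unop a) (f.unop b), fun α => M.2 (α ≫ f.unop)⟩
  map_id := by intro k; ext M; rfl
  map_comp := by intros; ext M; rfl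

namespace CoskAux

open CategoryTheory Opposite

lemma mapc (X : SymmSet) {a b c : Ups} (f : a ⟶ b) (g : b ⟶ c)
    (z : X.obj (op c)) :
    X.map (f ≫ g).op z = X.map f.op (X.map g.op z) := by
  rw [op_comp, FunctorToTypes.map_comp_apply]

lemma eps_comp' {k : ℕ} {m : Ups} (α : Ups.of k ⟶ m) (a b : Fin (k + 1)) :
    eps k a b ≫ α = eps m.toNat (α a) (α b) := by
  funext c
  show α (if c = 0 then a else b) = if c = 0 then α a else α b
  exact apply_ite α _ a b

lemma map_eps_two (Y : SymmSet) {c : Ups} {k : ℕ} (α : Ups.of k ⟶ c)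
    (a b : Fin (k + 1)) (z : Y.obj (op c)) :
    Y.map (eps k a b).op (Y.map α.op z)
      = Y.map (eps c.toNat (α a) (α b)).op z := by
  rw [← mapc, eps_comp']
  rfl

lemma X0_eq (X : SymmSet) (hX : Spiny X) (u v : simp X 0) : u = v := by
  apply hX 0
  funext t
  exact t.elim0

lemma muInj (X : SymmSet) (hX : Spiny X) (k : ℕ) :
    Function.Injective (muMat X k) := by
  intro x y h
  apply hX k
  funext t
  exact congrFun (congrFun h 0) t.succ

/-- The inclusion `[k] → [n]` for `k ≤ n`. -/
def deltaMap (n k : ℕ) (hk : k ≤ n) : Ups.of k ⟶ Ups.of n :=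
  fun a => ⟨a.1, show a.1 < n + 1 by
    have h : a.1 < k + 1 := a.isLt
    omega⟩

/-- The surjection `[n] → [k]`, `i ↦ min i k`. -/
def sigmaMap (n k : ℕ) : Ups.of n ⟶ Ups.of k :=
  fun a => ⟨min a.1 k, show min a.1 k < k + 1 by omega⟩

/-- The unique `k`-simplex with prescribed matrix, for `k ≤ n`. -/
noncomputable def lift (X : SymmSet) (n k : ℕ) (hk : k ≤ n)
    (M : Fin (k + 1) → Fin (k + 1) → simp X 1)
    (hM : ∀ α : Ups.of n ⟶ Ups.of k,
      (fun a b => M (α a) (α b)) ∈ Set.range (muMat X n)) : simp X k :=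
  X.map (deltaMap n k hk).op (Exists.choose (hM (sigmaMap n k)))

lemma lift_spec (X : SymmSet) (n k : ℕ) (hk : k ≤ n)
    (M : Fin (k + 1) → Fin (k + 1) → simp X 1)
    (hM : ∀ α : Ups.of n ⟶ Ups.of k,
      (fun a b => M (α a) (α b)) ∈ Set.range (muMat X n))
    (a b : Fin (k + 1)) :
    X.map (eps k a b).op (lift X n k hk M hM) = M a b := by
  have h := Exists.choose_spec (hM (sigmaMap n k))
  have h3 : ∀ c : Fin (k + 1), sigmaMap n k (deltaMap n k hk c) = c := by
    intro c
    apply Fin.ext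
    show min c.1 k = c.1
    have := c.isLt
    omega
  calc X.map (eps k a b).op (lift X n k hk M hM)
      = X.map (eps (Ups.of n).toNat (deltaMap n k hk a) (deltaMap n k hk b)).op
          (Exists.choose (hM (sigmaMap n k))) :=
        map_eps_two X (deltaMap n k hk) a b _
    _ = muMat X n (Exists.choose (hM (sigmaMap n k)))
          (deltaMap n k hk a) (deltaMap n k hk b) := rfl
    _ = M (sigmaMap n k (deltaMap n k hk a)) (sigmaMap n k (deltaMap n k hk b)) := by
        rw [h]
    _ = M a b := by rw [h3, h3]

lemma lift_unique (X : SymmSet) (hX : Spiny X) (n k : ℕ) (hk : k ≤ n)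
    (M : Fin (k + 1) → Fin (k + 1) → simp X 1)
    (hM : ∀ α : Ups.of n ⟶ Ups.of k,
      (fun a b => M (α a) (α b)) ∈ Set.range (muMat X n))
    (y : simp X k) (hy : ∀ a b, X.map (eps k a b).op y = M a b) :
    y = lift X n k hk M hM := by
  apply muInj X hX k
  funext a b
  show X.map (eps k a b).op y = muMat X k (lift X n k hk M hM) a b
  rw [hy]
  exact (lift_spec X n k hk M hM a b).symm

/-- The counit candidate `ι^*(coskSub X n) ⟶ ι^* X`. -/
noncomputable def epsNat (X : SymmSet) (hX : Spiny X) (n : ℕ) :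
    (upsIncl n).op ⋙ coskSub X n ⟶ (upsIncl n).op ⋙ X where
  app k := TypeCat.ofHom fun M => lift X n k.unop.obj.toNat k.unop.property M.1 M.2
  naturality := by
    intro k k' f
    ext M
    show lift X n (unop k').obj.toNat (unop k').property
        (fun a b => M.1 (f.unop.hom a) (f.unop.hom b))
        (fun α => M.2 (α ≫ (f.unop.hom : (unop k').obj ⟶ (unop k).obj)))
      = X.map (f.unop.hom : (unop k').obj ⟶ (unop k).obj).op
          (lift X n (unop k).obj.toNat (unop k).property M.1 M.2)
    refine (lift_unique X hX n (unop k').obj.toNat (unop k').property _ _ _ ?_).symm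
    intro a b
    let g : (unop k').obj ⟶ (unop k).obj := f.unop.hom
    show X.map (eps (unop k').obj.toNat a b).op
        (X.map g.op (lift X n (unop k).obj.toNat (unop k).property M.1 M.2))
      = M.1 (f.unop.hom a) (f.unop.hom b)
    exact (map_eps_two X g a b _).trans
      (lift_spec X n (unop k).obj.toNat (unop k).property M.1 M.2 _ _)

/-- The canonical map into `coskSub X n` from data on the restriction. -/
def toCoskSub (X : SymmSet) (n : ℕ) (hn : 1 ≤ n) (Y : SymmSet)
    (η : (upsIncl n).op ⋙ Y ⟶ (upsIncl n).op ⋙ X) : Y ⟶ coskSub X n where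
  app m := TypeCat.ofHom fun z => ⟨fun a b => η.app (op ⟨Ups.of 1, hn⟩)
      (Y.map (eps m.unop.toNat a b).op z), by
    intro α
    refine ⟨η.app (op ⟨Ups.of n, le_refl n⟩) (Y.map α.op z),
      funext fun a => funext fun b => ?_⟩
    let g1 : (⟨Ups.of 1, hn⟩ : UpsLE n) ⟶ ⟨Ups.of n, le_refl n⟩ := ObjectProperty.homMk (eps n a b)
    have hnat := NatTrans.naturality_apply (F := (upsIncl n).op ⋙ Y)
      (G := (upsIncl n).op ⋙ X) η g1.op (Y.map α.op z)
    calc X.map (eps n a b).op (η.app (op ⟨Ups.of n, le_refl n⟩) (Y.map α.op z))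
        = η.app (op ⟨Ups.of 1, hn⟩)
            (Y.map (eps n a b).op (Y.map α.op z)) := hnat.symm
      _ = η.app (op ⟨Ups.of 1, hn⟩)
            (Y.map (eps m.unop.toNat (α a) (α b)).op z) := by
          rw [map_eps_two]
      _ = (fun a b => η.app (op ⟨Ups.of 1, hn⟩)
            (Y.map (eps m.unop.toNat a b).op z)) (α a) (α b) := rfl⟩
  naturality := by
    intro m m' f
    ext z
    apply Subtype.ext
    funext a b
    show η.app (op (⟨Ups.of 1, hn⟩ : UpsLE n))
        (Y.map (eps (unop m').toNat a b).op
          (Y.map (f.unop : unop m' ⟶ unop m).op z))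
      = η.app (op (⟨Ups.of 1, hn⟩ : UpsLE n))
          (Y.map (eps (unop m).toNat (f.unop a) (f.unop b)).op z)
    exact congrArg (fun t => η.app (op (⟨Ups.of 1, hn⟩ : UpsLE n)) t) (map_eps_two Y _ a b z)

lemma toCoskSub_eps (X : SymmSet) (hX : Spiny X) (n : ℕ) (hn : 1 ≤ n)
    (Y : SymmSet) (η : (upsIncl n).op ⋙ Y ⟶ (upsIncl n).op ⋙ X) :
    Functor.whiskerLeft (upsIncl n).op (toCoskSub X n hn Y η) ≫ epsNat X hX n = η := by
  apply NatTrans.ext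
  funext k
  ext z
  symm
  refine lift_unique X hX n (unop k).obj.toNat (unop k).property _
    ((Functor.whiskerLeft (upsIncl n).op (toCoskSub X n hn Y η)).app k z).2 _ ?_
  intro a b
  show X.map (eps (unop k).obj.toNat a b).op (η.app k z)
    = η.app (op (⟨Ups.of 1, hn⟩ : UpsLE n))
        (Y.map (eps (unop k).obj.toNat a b).op z)
  let g1 : (⟨Ups.of 1, hn⟩ : UpsLE n) ⟶ k.unop := ObjectProperty.homMk (eps (unop k).obj.toNat a b)
  exact (NatTrans.naturality_apply (F := (upsIncl n).op ⋙ Y) (G := (upsIncl n).op ⋙ X) η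
    g1.op z).symm

lemma toCoskSub_unique (X : SymmSet) (hX : Spiny X) (n : ℕ) (hn : 1 ≤ n)
    (Y : SymmSet) (η : (upsIncl n).op ⋙ Y ⟶ (upsIncl n).op ⋙ X)
    (β : Y ⟶ coskSub X n)
    (hβ : Functor.whiskerLeft (upsIncl n).op β ≫ epsNat X hX n = η) :
    β = toCoskSub X n hn Y η := by
  apply NatTrans.ext
  funext m
  ext z
  apply Subtype.ext
  funext a b
  set w := Y.map (eps m.unop.toNat a b).op z with hw
  have hnatβ := NatTrans.naturality_apply (F := Y) (G := coskSub X n) β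
    (eps (unop m).toNat a b).op z
  have hval : (β.app (op (Ups.of 1)) w).1 0 1 = (β.app m z).1 a b :=
    congrArg (fun t => t.1 0 1) hnatβ
  have hβ1 : lift X n 1 hn (β.app (op (Ups.of 1)) w).1 (β.app (op (Ups.of 1)) w).2
      = η.app (op (⟨Ups.of 1, hn⟩ : UpsLE n)) w :=
    congrFun (congrArg (fun t => t.app (op (⟨Ups.of 1, hn⟩ : UpsLE n))) hβ) w
  have hspec := lift_spec X n 1 hn (β.app (op (Ups.of 1)) w).1
    (β.app (op (Ups.of 1)) w).2 0 1
  have hepsAll : ∀ c : Fin 2, (if c = 0 then (0 : Fin 2) else 1) = c := by decide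
  have heps : eps 1 (0 : Fin 2) 1 = 𝟙 (Ups.of 1) := funext hepsAll
  rw [heps, op_id, FunctorToTypes.map_id_apply] at hspec
  show (β.app m z).1 a b
    = η.app (op (⟨Ups.of 1, hn⟩ : UpsLE n)) w
  exact hval.symm.trans (hspec.symm.trans hβ1)

end CoskAux
namespace CoskAux

lemma coskSub_spiny (X : SymmSet) (hX : Spiny X) (n : ℕ) (hn : 2 ≤ n) :
    Spiny (coskSub X n) := by
  intro k M M' h
  -- diagonal-at-zero entries agree, via X₀ being a subsingleton
  have hvert : ∀ N N' : simp (coskSub X n) k, N.1 0 0 = N'.1 0 0 := by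
    intro N N'
    obtain ⟨y, hy⟩ := N.2 (show Ups.of n ⟶ Ups.of k from fun _ => 0)
    obtain ⟨y', hy'⟩ := N'.2 (show Ups.of n ⟶ Ups.of k from fun _ => 0)
    have e1 : N.1 0 0 = muMat X n y 0 0 := (congrFun (congrFun hy 0) 0).symm
    have e1' : N'.1 0 0 = muMat X n y' 0 0 := (congrFun (congrFun hy' 0) 0).symm
    have hf : eps n (0 : Fin (n + 1)) 0
        = (show Ups.of 1 ⟶ Ups.of 0 from fun _ => 0)
          ≫ (show Ups.of 0 ⟶ Ups.of n from fun _ => 0) := by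
      funext c
      show (if c = 0 then (0 : Fin (n + 1)) else 0) = 0
      exact ite_self _
    have e2 : muMat X n y 0 0
        = X.map (show Ups.of 1 ⟶ Ups.of 0 from fun _ => 0).op
          (X.map (show Ups.of 0 ⟶ Ups.of n from fun _ => 0).op y) := by
      show X.map (eps n 0 0).op y = _
      rw [hf, mapc]
    have e2' : muMat X n y' 0 0
        = X.map (show Ups.of 1 ⟶ Ups.of 0 from fun _ => 0).op
          (X.map (show Ups.of 0 ⟶ Ups.of n from fun _ => 0).op y') := by
      show X.map (eps n 0 0).op y' = _
      rw [hf, mapc]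
    rw [e1, e1', e2, e2',
      X0_eq X hX (X.map (show Ups.of 0 ⟶ Ups.of n from fun _ => 0).op y)
        (X.map (show Ups.of 0 ⟶ Ups.of n from fun _ => 0).op y')]
  -- the first row of M and M' agree
  have hrow : ∀ x : Fin (k + 1), M.1 0 x = M'.1 0 x := by
    intro x
    induction x using Fin.cases with
    | zero => exact hvert M M'
    | succ t =>
      have h1 := congrArg Subtype.val (congrFun h t)
      have h2 := congrFun (congrFun h1 0) 1
      exact h2
  apply Subtype.ext
  funext i j
  have h1n : 1 < n + 1 := by omega
  have h2n : 2 < n + 1 := by omega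
  -- the comparison map hitting 0, i, j
  let αm : Ups.of n ⟶ Ups.of k :=
    fun t => if t.1 = 1 then i else if t.1 = 2 then j else 0
  obtain ⟨y, hy⟩ := M.2 αm
  obtain ⟨y', hy'⟩ := M'.2 αm
  have hα0 : αm 0 = 0 := by
    show (if (0 : Fin (n + 1)).1 = 1 then i
      else if (0 : Fin (n + 1)).1 = 2 then j else 0) = 0
    rw [Fin.val_zero]
    simp
  have hyy' : y = y' := by
    apply hX n
    funext t
    have e := congrFun (congrFun hy 0) t.succ
    have e' := congrFun (congrFun hy' 0) t.succ
    show muMat X n y 0 t.succ = muMat X n y' 0 t.succ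
    rw [e, e']
    exact (congrArg (fun x => M.1 x (αm t.succ)) hα0).trans
      ((hrow _).trans (congrArg (fun x => M'.1 x (αm t.succ)) hα0).symm)
  have e3 : M.1 i j = muMat X n y ⟨1, h1n⟩ ⟨2, h2n⟩ :=
    (congrFun (congrFun hy ⟨1, h1n⟩) ⟨2, h2n⟩).symm
  have e3' : M'.1 i j = muMat X n y' ⟨1, h1n⟩ ⟨2, h2n⟩ :=
    (congrFun (congrFun hy' ⟨1, h1n⟩) ⟨2, h2n⟩).symm
  rw [e3, e3', hyy']

end CoskAux
namespace CoskAux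

noncomputable def coskIso (X : SymmSet) (hX : Spiny X) (n : ℕ) (hn1 : 1 ≤ n) :
    cosk n X ≅ coskSub X n := by
  let Fc := (Functor.whiskeringLeft (UpsLE n)ᵒᵖ Upsᵒᵖ Type).obj (upsIncl n).op
  let adj : Fc ⊣ (upsIncl n).op.ran := (upsIncl n).op.ranAdjunction (Type)
  let φ : cosk n X ⟶ coskSub X n :=
    toCoskSub X n hn1 (cosk n X) (adj.counit.app ((upsIncl n).op ⋙ X))
  let ψ : coskSub X n ⟶ cosk n X :=
    (adj.homEquiv (coskSub X n) ((upsIncl n).op ⋙ X)) (epsNat X hX n)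
  have e1 : Fc.map φ ≫ epsNat X hX n = adj.counit.app ((upsIncl n).op ⋙ X) :=
    toCoskSub_eps X hX n hn1 _ _
  have e2 : Fc.map ψ ≫ adj.counit.app ((upsIncl n).op ⋙ X) = epsNat X hX n := by
    have h0 := adj.homEquiv_counit (X := coskSub X n) (Y := (upsIncl n).op ⋙ X)
      (g := ψ)
    have h1 := (adj.homEquiv (coskSub X n) ((upsIncl n).op ⋙ X)).symm_apply_apply
      (epsNat X hX n)
    exact h0.symm.trans h1
  refine ⟨φ, ψ, ?_, ?_⟩
  · -- hom_inv_id
    apply (adj.homEquiv (cosk n X) ((upsIncl n).op ⋙ X)).symm.injective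
    have h2 := adj.homEquiv_counit (X := cosk n X) (Y := (upsIncl n).op ⋙ X)
      (g := φ ≫ ψ)
    have h3 := adj.homEquiv_counit (X := cosk n X) (Y := (upsIncl n).op ⋙ X)
      (g := 𝟙 (cosk n X))
    refine h2.trans (Eq.trans ?_ h3.symm)
    refine (congrArg (fun t => t ≫ adj.counit.app ((upsIncl n).op ⋙ X))
      (Fc.map_comp φ ψ)).trans (Eq.trans ?_ (congrArg
        (fun t => t ≫ adj.counit.app ((upsIncl n).op ⋙ X)) (Fc.map_id (cosk n X))).symm)
    refine (Category.assoc _ _ _).trans (Eq.trans ?_ (Category.id_comp _).symm)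
    show Fc.map φ ≫ Fc.map ψ ≫ adj.counit.app ((upsIncl n).op ⋙ X)
      = adj.counit.app ((upsIncl n).op ⋙ X)
    exact (congrArg (fun t => Fc.map φ ≫ t) e2).trans e1
  · -- inv_hom_id
    have hA : Functor.whiskerLeft (upsIncl n).op (ψ ≫ φ) ≫ epsNat X hX n
        = epsNat X hX n := by
      show Fc.map (ψ ≫ φ) ≫ epsNat X hX n = epsNat X hX n
      rw [CategoryTheory.Functor.map_comp, Category.assoc, e1, e2]
    have hB : Functor.whiskerLeft (upsIncl n).op (𝟙 (coskSub X n)) ≫ epsNat X hX n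
        = epsNat X hX n := by
      show Fc.map (𝟙 (coskSub X n)) ≫ epsNat X hX n = epsNat X hX n
      rw [CategoryTheory.Functor.map_id, Category.id_comp]
    exact (toCoskSub_unique X hX n hn1 _ _ _ hA).trans
      (toCoskSub_unique X hX n hn1 _ _ _ hB).symm

end CoskAux
/-- For a spiny symmetric set `X` and `n ≥ 2`, the `n`-coskeleton of `X` is
isomorphic to the symmetric subset of `Mat(X₁)` of matrices all of whose
`[n]`-restrictions lie in `μ_X(Xₙ)`; in particular `cosk_n X` is spiny. -/
theorem cosk_iso_coskSub_and_spiny (X : SymmSet) (hX : Spiny X) (n : ℕ)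
    (hn : 2 ≤ n) :
    Nonempty (cosk n X ≅ coskSub X n) ∧ Spiny (coskSub X n) := by
  exact ⟨⟨CoskAux.coskIso X hX n (by omega)⟩, CoskAux.coskSub_spiny X hX n hn⟩
end

section
/- A reduced symmetric set X is isomorphic to the nerve of a group if and only if the Segal map 𝓔ₙ : Xₙ → X₁ⁿ is a bijection for every n ≥ 1. -/
open CategoryTheory Opposite

/-! ### Auxiliary machinery -/

/-- The unique map `[1] → [0]`. -/
def UpsSig : Ups.of 1 ⟶ Ups.of 0 := fun _ => 0

/-- The map `[0] → [n]` picking out `i`. -/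
def UpsPt (n : ℕ) (i : Fin (n + 1)) : Ups.of 0 ⟶ Ups.of n := fun _ => i

/-- The map `[2] → [n]` sending `0, 1, 2` to `i, j, l`. -/
def UpsTri {n : ℕ} (i j l : Fin (n + 1)) : Ups.of 2 ⟶ Ups.of n :=
  fun k => if k = 0 then i else if k = 1 then j else l

lemma eps_comp {m n : ℕ} (f : Ups.of m ⟶ Ups.of n) (i j : Fin (m + 1)) :
    eps m i j ≫ f = eps n (f i) (f j) := by
  funext k
  show f (eps m i j k) = eps n (f i) (f j) k
  by_cases hk : k = 0 <;> simp [eps, hk]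

lemma mu_map (X : SymmSet) {m n : ℕ} (f : Ups.of m ⟶ Ups.of n) (x : simp X n)
    (i j : Fin (m + 1)) :
    muMat X m (X.map f.op x) i j = muMat X n x (f i) (f j) := by
  show X.map (eps m i j).op (X.map f.op x) = X.map (eps n (f i) (f j)).op x
  rw [← eps_comp f i j, op_comp, FunctorToTypes.map_comp_apply]

lemma mu_diag (X : SymmSet) (hX : Reduced X) (n : ℕ) (x : simp X n)
    (i : Fin (n + 1)) :
    muMat X n x i i = X.map UpsSig.op hX.1.some := by
  have h : eps n i i = UpsSig ≫ UpsPt n i := by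
    funext k
    show (if k = 0 then i else i) = i
    split <;> rfl
  show X.map (eps n i i).op x = _
  rw [h, op_comp, FunctorToTypes.map_comp_apply]
  exact congrArg (X.map UpsSig.op) (@Subsingleton.elim _ hX.2 _ _)

lemma mu_self (X : SymmSet) (g : simp X 1) : muMat X 1 g 0 1 = g := by
  have h : eps 1 0 1 = 𝟙 (Ups.of 1) := by
    funext k
    show (if k = 0 then (0 : Fin 2) else 1) = k
    fin_cases k <;> rfl
  show X.map (eps 1 0 1).op g = g
  rw [h, op_id, FunctorToTypes.map_id_apply]

/-! ### Cocycle matrices -/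

lemma cocycle_diag {G : Type} [Group G] {n : ℕ} {M : Fin (n + 1) → Fin (n + 1) → G}
    (hM : ∀ i j l, M i j * M j l = M i l) (i : Fin (n + 1)) : M i i = 1 := by
  have h2 : M i i * M i i = M i i * 1 := by rw [hM i i i, mul_one]
  exact mul_left_cancel h2

lemma cocycle_inv {G : Type} [Group G] {n : ℕ} {M : Fin (n + 1) → Fin (n + 1) → G}
    (hM : ∀ i j l, M i j * M j l = M i l) (i j : Fin (n + 1)) :
    M j i = (M i j)⁻¹ := by
  have h : M i j * M j i = 1 := by rw [hM i j i, cocycle_diag hM]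
  exact eq_inv_of_mul_eq_one_right h

lemma cocycle_ext {G : Type} [Group G] {n : ℕ} {M N : Fin (n + 1) → Fin (n + 1) → G}
    (hM : ∀ i j l, M i j * M j l = M i l) (hN : ∀ i j l, N i j * N j l = N i l)
    (h : ∀ k : Fin n, M k.castSucc k.succ = N k.castSucc k.succ) : M = N := by
  have key : ∀ d : ℕ, ∀ i j : Fin (n + 1), (j : ℕ) = (i : ℕ) + d → M i j = N i j := by
    intro d
    induction d with
    | zero =>
      intro i j hij
      have hij' : i = j := Fin.ext (by omega)
      subst hij'
      rw [cocycle_diag hM, cocycle_diag hN]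
    | succ d ih =>
      intro i j hij
      have hjlt := j.isLt
      have hd : (i : ℕ) + d < n := by omega
      let k : Fin n := ⟨(i : ℕ) + d, hd⟩
      have hj : j = k.succ := Fin.ext (by simp [k, Fin.val_succ]; omega)
      have h1 : M i k.castSucc = N i k.castSucc := ih i k.castSucc (by simp [k])
      rw [hj, ← hM i k.castSucc k.succ, ← hN i k.castSucc k.succ, h1, h k]
  funext i j
  rcases le_or_gt (i : ℕ) (j : ℕ) with hle | hlt
  · exact key ((j : ℕ) - (i : ℕ)) i j (by omega)
  · rw [cocycle_inv hM j i, cocycle_inv hN j i,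
      key ((i : ℕ) - (j : ℕ)) j i (by omega)]

/-! ### The group structure from Segal bijectivity -/

noncomputable def pgMul (X : SymmSet) (h2 : Function.Bijective (ES X 2))
    (g h : simp X 1) : simp X 1 :=
  muMat X 2 ((Equiv.ofBijective _ h2).symm ![g, h]) 0 2

lemma pgMul_mu (X : SymmSet) (h2 : Function.Bijective (ES X 2)) (n : ℕ)
    (x : simp X n) (i j l : Fin (n + 1)) :
    pgMul X h2 (muMat X n x i j) (muMat X n x j l) = muMat X n x i l := by
  set z := X.map (UpsTri i j l).op x with hz
  have h01 : muMat X 2 z 0 1 = muMat X n x i j := mu_map X (UpsTri i j l) x 0 1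
  have h12 : muMat X 2 z 1 2 = muMat X n x j l := mu_map X (UpsTri i j l) x 1 2
  have h02 : muMat X 2 z 0 2 = muMat X n x i l := mu_map X (UpsTri i j l) x 0 2
  have hES : ES X 2 z = ![muMat X 2 z 0 1, muMat X 2 z 1 2] := by
    funext k; fin_cases k <;> rfl
  have hsymm : (Equiv.ofBijective _ h2).symm ![muMat X 2 z 0 1, muMat X 2 z 1 2] = z := by
    rw [← hES]
    exact (Equiv.ofBijective _ h2).symm_apply_apply z
  show muMat X 2 ((Equiv.ofBijective _ h2).symm ![muMat X n x i j, muMat X n x j l]) 0 2 = _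
  rw [← h01, ← h12, hsymm, h02]

noncomputable def pgGroup (X : SymmSet) (hX : Reduced X)
    (hSeg : ∀ n, 1 ≤ n → Function.Bijective (ES X n)) : Group (simp X 1) where
  mul := pgMul X (hSeg 2 one_le_two)
  one := X.map UpsSig.op hX.1.some
  inv g := muMat X 1 g 1 0
  mul_assoc a b c := by
    have h2 := hSeg 2 one_le_two
    set x := (Equiv.ofBijective _ (hSeg 3 (by norm_num))).symm ![a, b, c] with hxdef
    have hx : ES X 3 x = ![a, b, c] :=
      (Equiv.ofBijective _ (hSeg 3 (by norm_num))).apply_symm_apply _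
    have h01 : muMat X 3 x 0 1 = a := congrFun hx 0
    have h12 : muMat X 3 x 1 2 = b := congrFun hx 1
    have h23 : muMat X 3 x 2 3 = c := congrFun hx 2
    have hab : muMat X 3 x 0 2 = pgMul X h2 a b := by
      rw [← h01, ← h12]; exact (pgMul_mu X h2 3 x 0 1 2).symm
    have hbc : muMat X 3 x 1 3 = pgMul X h2 b c := by
      rw [← h12, ← h23]; exact (pgMul_mu X h2 3 x 1 2 3).symm
    show pgMul X h2 (pgMul X h2 a b) c = pgMul X h2 a (pgMul X h2 b c)
    calc pgMul X h2 (pgMul X h2 a b) c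
        = pgMul X h2 (muMat X 3 x 0 2) (muMat X 3 x 2 3) := by rw [hab, h23]
      _ = muMat X 3 x 0 3 := pgMul_mu X h2 3 x 0 2 3
      _ = pgMul X h2 (muMat X 3 x 0 1) (muMat X 3 x 1 3) := (pgMul_mu X h2 3 x 0 1 3).symm
      _ = pgMul X h2 a (pgMul X h2 b c) := by rw [h01, hbc]
  one_mul a := by
    have h := pgMul_mu X (hSeg 2 one_le_two) 1 a 0 0 1
    rw [mu_diag X hX, mu_self] at h
    exact h
  mul_one a := by
    have h := pgMul_mu X (hSeg 2 one_le_two) 1 a 0 1 1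
    rw [mu_diag X hX, mu_self] at h
    exact h
  inv_mul_cancel a := by
    have h := pgMul_mu X (hSeg 2 one_le_two) 1 a 1 0 1
    rw [mu_self, mu_diag X hX] at h
    exact h

/-! ### Segal maps of a group nerve are bijective -/

lemma nerve_ES_bijective (G : Type) [Group G] (n : ℕ) :
    Function.Bijective (ES (grpNerve G) n) := by
  constructor
  · intro M N h
    apply Subtype.ext
    apply cocycle_ext M.2 N.2
    intro k
    have h2 := congrArg Subtype.val (congrFun h k)
    exact congrFun (congrFun h2 0) 1
  · intro w
    set g : ℕ → G := fun t => if h : t < n then (w ⟨t, h⟩).1 0 1 else 1 with hg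
    set q : ℕ → G := fun t => Nat.rec 1 (fun s acc => acc * g s) t with hq
    refine ⟨⟨fun i j => (q i)⁻¹ * q j, fun i j l => by group⟩, ?_⟩
    funext k
    apply Subtype.ext
    funext a b
    have hq1 : q ((k : ℕ) + 1) = q (k : ℕ) * (w k).1 0 1 := by
      show q (k : ℕ) * g (k : ℕ) = _
      rw [hg]
      simp only [k.isLt, dif_pos, Fin.eta]
    fin_cases a <;> fin_cases b
    · show (q (k : ℕ))⁻¹ * q (k : ℕ) = (w k).1 0 0
      rw [inv_mul_cancel, cocycle_diag (w k).2]
    · show (q (k : ℕ))⁻¹ * q ((k : ℕ) + 1) = (w k).1 0 1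
      rw [hq1, inv_mul_cancel_left]
    · show (q ((k : ℕ) + 1))⁻¹ * q (k : ℕ) = (w k).1 1 0
      rw [hq1, cocycle_inv (w k).2 0 1]
      group
    · show (q ((k : ℕ) + 1))⁻¹ * q ((k : ℕ) + 1) = (w k).1 1 1
      rw [inv_mul_cancel, cocycle_diag (w k).2]

/-- A reduced symmetric set is isomorphic to the nerve of a group if and only
if all of its Segal maps `𝓔ₙ : Xₙ → X₁ⁿ` (`n ≥ 1`) are bijections. -/
theorem reduced_iso_group_nerve_iff_segal_bijective (X : SymmSet)
    (hX : Reduced X) :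
    (∃ (G : Type) (hG : Group G), Nonempty (X ≅ @grpNerve G hG)) ↔
      ∀ n, 1 ≤ n → Function.Bijective (ES X n) := by
  constructor
  · rintro ⟨G, hG, ⟨φ⟩⟩ n hn
    letI := hG
    have hY := nerve_ES_bijective G n
    let eN : simp X n ≃ simp (grpNerve G) n := (φ.app (op (Ups.of n))).toEquiv
    let e1 : simp X 1 ≃ simp (grpNerve G) 1 := (φ.app (op (Ups.of 1))).toEquiv
    have key : ∀ (x : simp X n) (k : Fin n),
        ES (grpNerve G) n (eN x) k = e1 (ES X n x k) := by
      intro x k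
      exact (NatTrans.naturality_apply φ.hom (eps n k.castSucc k.succ).op x).symm
    constructor
    · intro x y h
      apply eN.injective
      apply hY.1
      funext k
      rw [key, key, h]
    · intro w
      obtain ⟨z, hz⟩ := hY.2 (fun k => e1 (w k))
      refine ⟨eN.symm z, ?_⟩
      funext k
      apply e1.injective
      rw [← key (eN.symm z) k, eN.apply_symm_apply]
      exact congrFun hz k
  · intro hSeg
    letI : Group (simp X 1) := pgGroup X hX hSeg
    refine ⟨simp X 1, inferInstance, ⟨?_⟩⟩
    let φ : X ⟶ grpNerve (simp X 1) :=
      { app := fun k => TypeCat.ofHom fun x => ⟨fun i j => muMat X (unop k).toNat x i j,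
          fun i j l => pgMul_mu X (hSeg 2 one_le_two) _ x i j l⟩
        naturality := by
          intro k k' f
          ext x
          apply Subtype.ext
          funext a b
          exact mu_map X f.unop x a b }
    have happ : ∀ m : ℕ, Function.Bijective (φ.app (op (Ups.of m))) := by
      intro m
      match m with
      | 0 =>
        constructor
        · intro x y _
          exact @Subsingleton.elim _ hX.2 x y
        · rintro ⟨N, hN⟩
          refine ⟨hX.1.some, ?_⟩
          apply Subtype.ext
          funext i j
          have hi : i = 0 := @Subsingleton.elim (Fin 1) _ i 0
          have hj : j = 0 := @Subsingleton.elim (Fin 1) _ j 0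
          subst hi; subst hj
          show muMat X 0 hX.1.some 0 0 = N 0 0
          rw [mu_diag X hX, cocycle_diag hN]
          rfl
      | (m + 1) =>
        constructor
        · intro x y h
          apply (hSeg (m + 1) (Nat.succ_le_succ (Nat.zero_le m))).1
          funext k
          exact congrFun (congrFun (congrArg Subtype.val h) k.castSucc) k.succ
        · rintro ⟨N, hN⟩
          have hb := hSeg (m + 1) (Nat.succ_le_succ (Nat.zero_le m))
          refine ⟨(Equiv.ofBijective _ hb).symm (fun k => N k.castSucc k.succ), ?_⟩
          have hx : ES X (m + 1) ((Equiv.ofBijective _ hb).symm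
                (fun k => N k.castSucc k.succ)) = fun k => N k.castSucc k.succ :=
            (Equiv.ofBijective _ hb).apply_symm_apply _
          apply Subtype.ext
          apply cocycle_ext (fun i j l => pgMul_mu X (hSeg 2 one_le_two) _ _ i j l) hN
          intro k
          exact congrFun hx k
    haveI : ∀ k, IsIso (φ.app k) :=
      fun k => (isIso_iff_bijective _).mpr (happ (unop k).toNat)
    haveI : IsIso φ := NatIso.isIso_of_isIso_app φ
    exact asIso φ
end
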